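/- Let ℓ ≥ 1 be an integer, a = (a_0, …, a_ℓ) ∈ ℝ^{ℓ+1}, ξ ∈ ℝ, h ≠ 0, and let q_a be the unique polynomial of degree at most ℓ with q_a(ξ + i·h) = a_i for i = 0, …, ℓ. Then for every integer s with 0 ≤ s ≤ ℓ, the (ℓ-s)-th derivative of q_a at ξ satisfies q_a^{(ℓ-s)}(ξ) = h^{s-ℓ} · ∑_{k=0}^{s} σ_{ℓ,s,k} · (∑_{j=0}^{ℓ} (-1)^j · C(ℓ,j) · j^k · a_j), where σ_{ℓ,s,k} = (-1)^{ℓ-s+k} · ((ℓ-s)!/ℓ!) · τ_{ℓ,s-k,0} and τ_{ℓ,m,0} = ∑_{1 ≤ i_1 < … < i_m ≤ ℓ} i_1⋯i_m is the m-th elementary symmetric polynomial in 1, 2, …, ℓ (with τ_{ℓ,0,0} = 1). -/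

import Mathlib

/-- `τ_{ℓ,m,0}`: the `m`-th elementary symmetric polynomial in `1, 2, …, ℓ`
(with `τ_{ℓ,0,0} = 1`). -/
def tau (ℓ m : ℕ) : ℝ :=
  ∑ S ∈ (Finset.Icc 1 ℓ).powersetCard m, ∏ i ∈ S, (i : ℝ)

open Polynomial Finset

lemma neg_one_pow_sub' (a b : ℕ) (h : b ≤ a) : (-1:ℝ)^(a-b) = (-1)^(a+b) := by
  obtain ⟨c, rfl⟩ := Nat.exists_eq_add_of_le h
  have h1 : b + c - b = c := by omega
  have h2 : b + c + b = 2*b + c := by omega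
  rw [h1, h2, pow_add, pow_mul]
  norm_num

lemma sum_powersetCard_range (ℓ m : ℕ) :
    ∑ T ∈ (Finset.range (ℓ+1)).powersetCard m, ∏ i ∈ T, (i:ℝ) = tau ℓ m := by
  have hr : Finset.range (ℓ+1) = insert 0 (Finset.Icc 1 ℓ) := by
    ext x; simp only [Finset.mem_range, Finset.mem_insert, Finset.mem_Icc]; omega
  have h0 : (0:ℕ) ∉ Finset.Icc 1 ℓ := by simp
  cases m with
  | zero => simp [tau]
  | succ k =>
    rw [hr, Finset.powersetCard_succ_insert h0, Finset.sum_union, tau]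
    · have hz : ∑ T ∈ ((Finset.Icc 1 ℓ).powersetCard k).image (insert 0),
          ∏ i ∈ T, (i:ℝ) = 0 := by
        apply Finset.sum_eq_zero
        intro T hT
        obtain ⟨T', _, rfl⟩ := Finset.mem_image.mp hT
        exact Finset.prod_eq_zero (Finset.mem_insert_self 0 T') (by norm_num)
      rw [hz, add_zero]
    · rw [Finset.disjoint_left]
      intro T hT1 hT2
      obtain ⟨T', hT', rfl⟩ := Finset.mem_image.mp hT2
      have := Finset.mem_powersetCard.mp hT1
      exact h0 (this.1 (Finset.mem_insert_self 0 T'))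

lemma W_coeff (ℓ m : ℕ) (hm : m ≤ ℓ + 1) :
    (∏ i ∈ Finset.range (ℓ+1), (X - C (i:ℝ))).coeff (ℓ + 1 - m) = (-1)^m * tau ℓ m := by
  have hrw : ∏ i ∈ Finset.range (ℓ+1), (X - C (i:ℝ))
      = (((Finset.range (ℓ+1)).val.map (fun i : ℕ => (i:ℝ))).map (fun t : ℝ => X - C t)).prod := by
    rw [Multiset.map_map]
    rfl
  have hcard : Multiset.card ((Finset.range (ℓ+1)).val.map (fun i : ℕ => (i:ℝ))) = ℓ + 1 := by
    simp
  rw [hrw, Multiset.prod_X_sub_C_coeff _ (by rw [hcard]; omega), hcard]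
  have h1 : ℓ + 1 - (ℓ + 1 - m) = m := by omega
  rw [h1, Finset.esymm_map_val, ← sum_powersetCard_range ℓ m]

lemma tau_zero (ℓ : ℕ) : tau ℓ 0 = 1 := by simp [tau]

lemma N_monic (ℓ r : ℕ) :
    (∏ i ∈ (Finset.range (ℓ+1)).erase r, (X - C (i:ℝ))).Monic :=
  monic_prod_of_monic _ _ (fun i _ => monic_X_sub_C _)

lemma N_natDegree (ℓ r : ℕ) (hr : r ≤ ℓ) :
    (∏ i ∈ (Finset.range (ℓ+1)).erase r, (X - C (i:ℝ))).natDegree = ℓ := by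
  rw [natDegree_prod _ _ (fun i _ => X_sub_C_ne_zero _)]
  simp only [natDegree_X_sub_C, Finset.sum_const, smul_eq_mul, mul_one]
  rw [Finset.card_erase_of_mem (by simp; omega), Finset.card_range]
  omega

lemma N_coeff (ℓ r : ℕ) (hr : r ≤ ℓ) : ∀ s, s ≤ ℓ →
    (∏ i ∈ (Finset.range (ℓ+1)).erase r, (X - C (i:ℝ))).coeff (ℓ - s)
      = ∑ k ∈ Finset.range (s+1), (r:ℝ)^k * ((-1)^(s-k) * tau ℓ (s-k)) := by
  have hmem : r ∈ Finset.range (ℓ+1) := by simp; omega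
  set N := ∏ i ∈ (Finset.range (ℓ+1)).erase r, (X - C (i:ℝ)) with hN
  have hW : ∏ i ∈ Finset.range (ℓ+1), (X - C (i:ℝ)) = (X - C (r:ℝ)) * N :=
    (Finset.mul_prod_erase _ _ hmem).symm
  intro s
  induction s with
  | zero =>
    intro _
    have h1 := (N_monic ℓ r).coeff_natDegree
    rw [N_natDegree ℓ r hr, ← hN] at h1
    simpa [tau_zero] using h1
  | succ s ih =>
    intro hs1
    have hs : s ≤ ℓ := by omega
    have hWc : (∏ i ∈ Finset.range (ℓ+1), (X - C (i:ℝ))).coeff (ℓ - s)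
        = N.coeff (ℓ - (s+1)) - (r:ℝ) * N.coeff (ℓ - s) := by
      have h1 : ℓ - s = (ℓ - (s+1)) + 1 := by omega
      rw [hW, sub_mul, coeff_sub, h1, coeff_X_mul, coeff_C_mul]
    have hWv : (∏ i ∈ Finset.range (ℓ+1), (X - C (i:ℝ))).coeff (ℓ - s)
        = (-1)^(s+1) * tau ℓ (s+1) := by
      have h2 : ℓ - s = ℓ + 1 - (s+1) := by omega
      rw [h2, W_coeff ℓ (s+1) (by omega)]
    have key : N.coeff (ℓ - (s+1))
        = (-1)^(s+1) * tau ℓ (s+1) + (r:ℝ) * N.coeff (ℓ - s) := by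
      rw [← hWv, hWc]; ring
    rw [key, ih hs, Finset.sum_range_succ' _ (s+1), Finset.mul_sum, add_comm]
    congr 1
    · apply Finset.sum_congr rfl
      intro k _
      have h3 : s + 1 - (k + 1) = s - k := by omega
      rw [h3]; ring
    · norm_num

lemma denom (ℓ r : ℕ) (hr : r ≤ ℓ) :
    ∏ i ∈ (Finset.range (ℓ+1)).erase r, ((r:ℝ) - (i:ℕ))
      = (-1)^(ℓ-r) * r.factorial * (ℓ-r).factorial := by
  have hsplit : (Finset.range (ℓ+1)).erase r = Finset.range r ∪ Finset.Ico (r+1) (ℓ+1) := by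
    ext x
    simp only [Finset.mem_erase, Finset.mem_range, Finset.mem_union, Finset.mem_Ico]
    omega
  have hdisj : Disjoint (Finset.range r) (Finset.Ico (r+1) (ℓ+1)) := by
    rw [Finset.disjoint_left]
    intro x hx hx2
    simp only [Finset.mem_range] at hx
    simp only [Finset.mem_Ico] at hx2
    omega
  rw [hsplit, Finset.prod_union hdisj]
  have h1 : ∏ i ∈ Finset.range r, ((r:ℝ) - (i:ℕ)) = r.factorial := by
    rw [← Finset.prod_range_reflect]
    have hcong : ∀ j ∈ Finset.range r, (r:ℝ) - ((r - 1 - j : ℕ):ℝ) = ((j:ℝ)+1) := by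
      intro j hj
      rw [Finset.mem_range] at hj
      have : ((r - 1 - j : ℕ):ℝ) = (r:ℝ) - (j:ℝ) - 1 := by
        have : (r - 1 - j : ℕ) = r - (j+1) := by omega
        rw [this, Nat.cast_sub (by omega)]
        push_cast
        ring
      rw [this]; ring
    rw [Finset.prod_congr rfl hcong]
    have : ∀ j ∈ Finset.range r, ((j:ℝ)+1) = (((j+1 : ℕ)):ℝ) := by intro j _; push_cast; ring
    rw [Finset.prod_congr rfl this, ← Nat.cast_prod, Finset.prod_range_add_one_eq_factorial]
  have h2 : ∏ i ∈ Finset.Ico (r+1) (ℓ+1), ((r:ℝ) - (i:ℕ))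
      = (-1)^(ℓ-r) * (ℓ-r).factorial := by
    rw [Finset.prod_Ico_eq_prod_range]
    have hc : ℓ + 1 - (r+1) = ℓ - r := by omega
    rw [hc]
    have hcong : ∀ j ∈ Finset.range (ℓ-r), (r:ℝ) - ((r + 1 + j : ℕ):ℝ) = -((j:ℝ)+1) := by
      intro j _; push_cast; ring
    rw [Finset.prod_congr rfl hcong]
    have : ∀ j ∈ Finset.range (ℓ-r), -((j:ℝ)+1) = (-1) * (((j+1:ℕ)):ℝ) := by
      intro j _; push_cast; ring
    rw [Finset.prod_congr rfl this, Finset.prod_mul_distrib, Finset.prod_const,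
      Finset.card_range, ← Nat.cast_prod, Finset.prod_range_add_one_eq_factorial]
  rw [h1, h2]; ring

lemma basis_deriv (ℓ s r : ℕ) (hs : s ≤ ℓ) (hr : r ≤ ℓ) :
    (derivative^[ℓ-s] (Lagrange.basis (Finset.range (ℓ+1)) (fun i : ℕ => (i:ℝ)) r)).eval 0
      = ∑ k ∈ Finset.range (s+1),
          ((-1:ℝ)^(ℓ-s+k) * ((ℓ-s).factorial : ℝ) / (ℓ.factorial : ℝ) * tau ℓ (s-k)) *
            ((-1:ℝ)^r * (ℓ.choose r : ℝ) * (r:ℝ)^k) := by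
  have hbasis : Lagrange.basis (Finset.range (ℓ+1)) (fun i : ℕ => (i:ℝ)) r
      = C ((∏ i ∈ (Finset.range (ℓ+1)).erase r, ((r:ℝ) - (i:ℕ)))⁻¹) *
        ∏ i ∈ (Finset.range (ℓ+1)).erase r, (X - C (i:ℝ)) := by
    rw [Lagrange.basis]
    simp_rw [Lagrange.basisDivisor]
    rw [Finset.prod_mul_distrib, ← Finset.prod_inv_distrib, map_prod]
  rw [← coeff_zero_eq_eval_zero, coeff_iterate_derivative]
  simp only [zero_add, Nat.descFactorial_self, nsmul_eq_mul]
  rw [hbasis, coeff_C_mul, denom ℓ r hr, N_coeff ℓ r hr s hs, Finset.mul_sum, Finset.mul_sum]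
  apply Finset.sum_congr rfl
  intro k hk
  rw [Finset.mem_range] at hk
  have hk' : k ≤ s := by omega
  have hch : (ℓ.choose r : ℝ) = (ℓ.factorial : ℝ) / ((r.factorial : ℝ) * ((ℓ-r).factorial : ℝ)) := by
    rw [eq_div_iff (by positivity)]
    rw [← mul_assoc]
    exact_mod_cast Nat.choose_mul_factorial_mul_factorial hr
  rw [hch, neg_one_pow_sub' s k hk', neg_one_pow_sub' ℓ r hr, pow_add (-1:ℝ) (ℓ-s) k,
    neg_one_pow_sub' ℓ s hs]
  have h1 : ((-1:ℝ)^(ℓ+r) * r.factorial * (ℓ-r).factorial)⁻¹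
      = (-1:ℝ)^(ℓ+r) * ((r.factorial : ℝ) * ((ℓ-r).factorial : ℝ))⁻¹ := by
    rw [mul_assoc, mul_inv, ← inv_pow, inv_neg, inv_one]
  rw [h1]
  have hf1 : (r.factorial : ℝ) ≠ 0 := by positivity
  have hf2 : ((ℓ-r).factorial : ℝ) ≠ 0 := by positivity
  have hf3 : (ℓ.factorial : ℝ) ≠ 0 := by positivity
  field_simp
  ring

lemma main_lemma (ℓ s : ℕ) (hs : s ≤ ℓ) (p : ℝ[X]) (hp : p.degree ≤ (ℓ : WithBot ℕ)) :
    (derivative^[ℓ - s] p).eval 0 =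
      ∑ k ∈ Finset.range (s + 1),
        ((-1:ℝ)^(ℓ-s+k) * ((ℓ-s).factorial : ℝ) / (ℓ.factorial : ℝ) * tau ℓ (s-k)) *
          ∑ j ∈ Finset.range (ℓ+1),
            (-1:ℝ)^j * (ℓ.choose j : ℝ) * (j:ℝ)^k * p.eval (j:ℝ) := by
  have hinj : Set.InjOn (fun i : ℕ => (i:ℝ)) (Finset.range (ℓ+1)) :=
    fun a _ b _ hab => Nat.cast_injective hab
  have hdeg : p.degree < (#(Finset.range (ℓ+1)) : WithBot ℕ) := by
    rw [Finset.card_range]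
    exact lt_of_le_of_lt hp (by exact_mod_cast Nat.lt_succ_self ℓ)
  have hrep := Lagrange.eq_interpolate hinj hdeg
  rw [Lagrange.interpolate_apply] at hrep
  conv_lhs => rw [hrep]
  rw [iterate_derivative_sum, eval_finset_sum]
  simp only [iterate_derivative_C_mul, eval_mul, eval_C]
  simp_rw [Finset.mul_sum]
  rw [Finset.sum_comm]
  apply Finset.sum_congr rfl
  intro r hr
  rw [Finset.mem_range] at hr
  rw [basis_deriv ℓ s r hs (by omega), Finset.mul_sum]
  apply Finset.sum_congr rfl
  intro k _
  ring

lemma comp_iterate (q : ℝ[X]) (h ξ : ℝ) (m : ℕ) :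
    derivative^[m] (q.comp (C h * X + C ξ))
      = C (h^m) * (derivative^[m] q).comp (C h * X + C ξ) := by
  induction m with
  | zero => simp
  | succ n ih =>
    rw [Function.iterate_succ_apply', ih, derivative_C_mul, derivative_comp,
      Function.iterate_succ_apply']
    have : derivative (C h * X + C ξ) = C h := by simp
    rw [this, pow_succ, map_mul]
    ring

theorem deriv_interpolation (ℓ : ℕ) (hℓ : 1 ≤ ℓ) (a : Fin (ℓ + 1) → ℝ)
    (ξ h : ℝ) (hh : h ≠ 0) (q : Polynomial ℝ) (hdeg : q.degree ≤ ℓ)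
    (hq : ∀ i : Fin (ℓ + 1), q.eval (ξ + (i : ℕ) * h) = a i)
    (s : ℕ) (hs : s ≤ ℓ) :
    (Polynomial.derivative^[ℓ - s] q).eval ξ =
      h ^ ((s : ℤ) - (ℓ : ℤ)) *
        ∑ k ∈ Finset.range (s + 1),
          ((-1 : ℝ) ^ (ℓ - s + k) * ((ℓ - s).factorial : ℝ) / (ℓ.factorial : ℝ) *
              tau ℓ (s - k)) *
            ∑ j : Fin (ℓ + 1),
              (-1 : ℝ) ^ (j : ℕ) * (ℓ.choose (j : ℕ) : ℝ) * ((j : ℕ) : ℝ) ^ k * a j := by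
  set p : ℝ[X] := q.comp (C h * X + C ξ) with hp
  have hqnat : q.natDegree ≤ ℓ := natDegree_le_iff_degree_le.mpr hdeg
  have hpdeg : p.degree ≤ (ℓ : WithBot ℕ) := by
    have h1 : p.natDegree ≤ ℓ := by
      rw [hp, natDegree_comp, natDegree_linear hh, mul_one]
      exact hqnat
    exact le_trans degree_le_natDegree (by exact_mod_cast h1)
  have hpeval : ∀ j : ℕ, p.eval (j:ℝ) = q.eval (ξ + (j:ℝ)*h) := by
    intro j
    rw [hp, eval_comp]
    simp only [eval_add, eval_mul, eval_C, eval_X]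
    congr 1
    ring
  have hmain := main_lemma ℓ s hs p hpdeg
  have hlhs : (derivative^[ℓ-s] p).eval 0 = h^(ℓ-s) * (derivative^[ℓ-s] q).eval ξ := by
    rw [comp_iterate, eval_mul, eval_C, eval_comp]
    simp
  rw [hlhs] at hmain
  have hsum : ∀ k : ℕ,
      (∑ j : Fin (ℓ + 1),
        (-1 : ℝ) ^ (j : ℕ) * (ℓ.choose (j : ℕ) : ℝ) * ((j : ℕ) : ℝ) ^ k * a j)
      = ∑ j ∈ Finset.range (ℓ+1),
            (-1:ℝ)^j * (ℓ.choose j : ℝ) * (j:ℝ)^k * p.eval (j:ℝ) := by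
    intro k
    rw [← Fin.sum_univ_eq_sum_range
      (fun j => (-1:ℝ)^j * (ℓ.choose j : ℝ) * (j:ℝ)^k * p.eval (j:ℝ)) (ℓ+1)]
    apply Finset.sum_congr rfl
    intro j _
    rw [hpeval, hq j]
  simp_rw [hsum]
  rw [← hmain]
  have hz : h ^ ((s:ℤ) - (ℓ:ℤ)) = (h ^ (ℓ-s))⁻¹ := by
    have : (s:ℤ) - (ℓ:ℤ) = -(((ℓ - s : ℕ)):ℤ) := by
      rw [Nat.cast_sub hs]; ring
    rw [this, zpow_neg, zpow_natCast]
  rw [hz, inv_mul_cancel_left₀ (pow_ne_zero _ hh)]
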